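/- Let n ∈ ℕ and let E, A be n×n real matrices such that the pencil (E,A) is regular, i.e. the polynomial det(X·E − A) ∈ ℝ[X] is not the zero polynomial. Then there exist invertible real n×n matrices Q and P, natural numbers n₁, n₂ with n₁ + n₂ = n, a real n₁×n₁ matrix W and a nilpotent real n₂×n₂ matrix N such that Q·E·P equals the block-diagonal matrix diag(I_{n₁}, N) and Q·A·P equals the block-diagonal matrix diag(W, I_{n₂}). -/

import Mathlib

set_option maxHeartbeats 1000000

open Matrix Polynomial

section Aux

variable {R M : Type*} [CommRing R] [AddCommGroup M] [Module R M]

lemma toMatrix_reindex_self {ι κ : Type*} [Fintype ι] [Fintype κ] [DecidableEq ι] [DecidableEq κ]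
    (b : Module.Basis ι R M) (e : ι ≃ κ) (f : M →ₗ[R] M) :
    LinearMap.toMatrix (b.reindex e) (b.reindex e) f
      = Matrix.reindex e e (LinearMap.toMatrix b b f) := by
  ext i j
  simp [LinearMap.toMatrix_apply, Module.Basis.repr_reindex, Finsupp.mapDomain_equiv_apply]

lemma toMatrix_fromBlocks_of_isCompl {p q : Submodule R M} (h : IsCompl p q)
    {ι₁ ι₂ : Type*} [Fintype ι₁] [Fintype ι₂] [DecidableEq ι₁] [DecidableEq ι₂]
    (b₁ : Module.Basis ι₁ R p) (b₂ : Module.Basis ι₂ R q) (f : M →ₗ[R] M)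
    (hp : ∀ x ∈ p, f x ∈ p) (hq : ∀ x ∈ q, f x ∈ q) :
    LinearMap.toMatrix ((b₁.prod b₂).map (Submodule.prodEquivOfIsCompl p q h))
        ((b₁.prod b₂).map (Submodule.prodEquivOfIsCompl p q h)) f
      = Matrix.fromBlocks (LinearMap.toMatrix b₁ b₁ (f.restrict hp)) 0 0
          (LinearMap.toMatrix b₂ b₂ (f.restrict hq)) := by
  set b := (b₁.prod b₂).map (Submodule.prodEquivOfIsCompl p q h) with hb
  have hbinl : ∀ j, b (Sum.inl j) = (b₁ j : M) := by
    intro j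
    simp [hb, Module.Basis.map_apply, Module.Basis.prod_apply, Submodule.coe_prodEquivOfIsCompl']
  have hbinr : ∀ j, b (Sum.inr j) = (b₂ j : M) := by
    intro j
    simp [hb, Module.Basis.map_apply, Module.Basis.prod_apply, Submodule.coe_prodEquivOfIsCompl']
  have key₁ : ∀ (y : p), b.repr (y : M) = (b₁.prod b₂).repr (y, 0) := by
    intro y
    rw [hb, Module.Basis.map_repr, LinearEquiv.trans_apply,
      Submodule.prodEquivOfIsCompl_symm_apply_left]
  have key₂ : ∀ (y : q), b.repr (y : M) = (b₁.prod b₂).repr (0, y) := by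
    intro y
    rw [hb, Module.Basis.map_repr, LinearEquiv.trans_apply,
      Submodule.prodEquivOfIsCompl_symm_apply_right]
  ext i j
  rcases i with i | i <;> rcases j with j | j
  · rw [LinearMap.toMatrix_apply, hbinl,
      show f (b₁ j : M) = ((f.restrict hp) (b₁ j) : M) from
        (LinearMap.restrict_coe_apply f hp (b₁ j)).symm, key₁]
    simp [LinearMap.toMatrix_apply]
  · rw [LinearMap.toMatrix_apply, hbinr,
      show f (b₂ j : M) = ((f.restrict hq) (b₂ j) : M) from
        (LinearMap.restrict_coe_apply f hq (b₂ j)).symm, key₂]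
    simp
  · rw [LinearMap.toMatrix_apply, hbinl,
      show f (b₁ j : M) = ((f.restrict hp) (b₁ j) : M) from
        (LinearMap.restrict_coe_apply f hp (b₁ j)).symm, key₁]
    simp
  · rw [LinearMap.toMatrix_apply, hbinr,
      show f (b₂ j : M) = ((f.restrict hq) (b₂ j) : M) from
        (LinearMap.restrict_coe_apply f hq (b₂ j)).symm, key₂]
    simp [LinearMap.toMatrix_apply]

end Aux

/-- The canonical identification of `Fin n` with `Fin n₁ ⊕ Fin n₂` when `n₁ + n₂ = n`. -/
def blockEquiv {n₁ n₂ n : ℕ} (h : n₁ + n₂ = n) : Fin n ≃ (Fin n₁ ⊕ Fin n₂) :=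
  (finCongr h.symm).trans finSumFinEquiv.symm

/-- Existence of the Weierstrass canonical form for a regular pencil `(E, A)`. -/
theorem weierstrass_canonical_form_exists (n : ℕ) (E A : Matrix (Fin n) (Fin n) ℝ)
    (hreg : Matrix.det ((Polynomial.X : Polynomial ℝ) • E.map Polynomial.C - A.map Polynomial.C) ≠ 0) :
    ∃ (n₁ n₂ : ℕ) (hn : n₁ + n₂ = n) (Q P : Matrix (Fin n) (Fin n) ℝ)
      (W : Matrix (Fin n₁) (Fin n₁) ℝ) (N : Matrix (Fin n₂) (Fin n₂) ℝ),
      IsUnit Q ∧ IsUnit P ∧ IsNilpotent N ∧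
      Matrix.reindex (blockEquiv hn) (blockEquiv hn) (Q * E * P)
        = Matrix.fromBlocks 1 0 0 N ∧
      Matrix.reindex (blockEquiv hn) (blockEquiv hn) (Q * A * P)
        = Matrix.fromBlocks W 0 0 1 := by
  classical
  -- Step 1: find `lam` with `det (lam • E - A) ≠ 0`
  obtain ⟨lam, hlam⟩ : ∃ lam : ℝ,
      (((X : ℝ[X]) • E.map C - A.map C).det).eval lam ≠ 0 := by
    by_contra hc
    push_neg at hc
    exact hreg (Polynomial.zero_of_eval_zero _ hc)
  set S : Matrix (Fin n) (Fin n) ℝ := lam • E - A with hSdef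
  have hSdet : IsUnit S.det := by
    have hmap : ((X : ℝ[X]) • E.map C - A.map C).map (Polynomial.evalRingHom lam) = S := by
      ext i j
      simp [hSdef, Matrix.map_apply, smul_eq_mul]
      ring
    have := (Polynomial.evalRingHom lam).map_det ((X : ℝ[X]) • E.map C - A.map C)
    rw [RingHom.mapMatrix_apply, hmap] at this
    rw [isUnit_iff_ne_zero]
    intro h0
    rw [h0] at this
    exact hlam this
  set Et : Matrix (Fin n) (Fin n) ℝ := S⁻¹ * E with hEt
  set At : Matrix (Fin n) (Fin n) ℝ := S⁻¹ * A with hAt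
  have hAtEt : At = lam • Et - 1 := by
    have h1 : lam • Et - At = 1 := by
      rw [hEt, hAt, ← Matrix.mul_smul, ← Matrix.mul_sub, ← hSdef,
        Matrix.nonsing_inv_mul _ hSdet]
    rw [← h1, sub_sub_cancel]
  set f : Module.End ℝ (Fin n → ℝ) := Matrix.toLin' Et with hf
  -- Step 2: Fitting decomposition
  obtain ⟨k, hk1, hcompl⟩ : ∃ k, 1 ≤ k ∧
      IsCompl (LinearMap.ker (f ^ k)) (LinearMap.range (f ^ k)) := by
    obtain ⟨k, hk⟩ := ((Filter.eventually_ge_atTop 1).and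
      f.eventually_isCompl_ker_pow_range_pow).exists
    exact ⟨k, hk.1, hk.2⟩
  set Vk := LinearMap.ker (f ^ k) with hVk
  set Wk := LinearMap.range (f ^ k) with hWk
  have hfV : ∀ x ∈ Vk, f x ∈ Vk := by
    intro x hx
    rw [hVk, LinearMap.mem_ker] at hx ⊢
    rw [← Module.End.mul_apply, ← pow_succ, pow_succ', Module.End.mul_apply, hx, map_zero]
  have hfW : ∀ x ∈ Wk, f x ∈ Wk := by
    rintro x ⟨y, rfl⟩
    exact ⟨f y, by rw [← Module.End.mul_apply, ← pow_succ, pow_succ', Module.End.mul_apply]⟩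
  have hfVnil : (f.restrict hfV) ^ k = 0 := by
    apply LinearMap.ext
    intro x
    apply Subtype.ext
    rw [Module.End.pow_restrict]
    have hx : (f ^ k) (x : Fin n → ℝ) = 0 := x.2
    simp [LinearMap.restrict_apply, hx]
  have hinj : Function.Injective (f.restrict hfW) := by
    rw [← LinearMap.ker_eq_bot]
    rw [Submodule.eq_bot_iff]
    rintro ⟨x, hx⟩ hker
    have hfx : f x = 0 := by
      simpa [LinearMap.restrict_apply, Subtype.ext_iff] using hker
    have hxV : x ∈ Vk := by
      rw [hVk, LinearMap.mem_ker]
      exact Module.End.pow_map_zero_of_le hk1 (by simpa using hfx)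
    have hx0 : x = 0 := (Submodule.disjoint_def.mp hcompl.disjoint) x hxV hx
    simp [Subtype.ext_iff, hx0]
  have hbij : Function.Bijective (f.restrict hfW) :=
    ⟨hinj, (LinearMap.injective_iff_surjective).mp hinj⟩
  -- Step 3: dimensions and bases
  have hdim : Module.finrank ℝ Wk + Module.finrank ℝ Vk = n := by
    have h1 := Submodule.finrank_add_eq_of_isCompl hcompl
    rw [Module.finrank_fin_fun] at h1
    omega
  refine ⟨Module.finrank ℝ Wk, Module.finrank ℝ Vk, hdim, ?_⟩
  set bW := Module.finBasis ℝ Wk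
  set bV := Module.finBasis ℝ Vk
  set b := (bW.prod bV).map (Submodule.prodEquivOfIsCompl Wk Vk hcompl.symm) with hbdef
  set e := blockEquiv hdim with he
  set stdb := (Pi.basisFun ℝ (Fin n)).reindex e with hstdb
  set MW := LinearMap.toMatrix bW bW (f.restrict hfW) with hMW
  set MV := LinearMap.toMatrix bV bV (f.restrict hfV) with hMV
  have hMblock : LinearMap.toMatrix b b f = Matrix.fromBlocks MW 0 0 MV :=
    toMatrix_fromBlocks_of_isCompl hcompl.symm bW bV f hfW hfV
  -- invertibility of MW
  have hMWdet : IsUnit MW.det := by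
    set g := (LinearEquiv.ofBijective (f.restrict hfW) hbij).symm
    apply Matrix.isUnit_det_of_right_inverse (B := LinearMap.toMatrix bW bW (g : Wk →ₗ[ℝ] Wk))
    rw [hMW, ← LinearMap.toMatrix_comp bW bW bW]
    have : (f.restrict hfW) ∘ₗ (g : Wk →ₗ[ℝ] Wk) = LinearMap.id := by
      apply LinearMap.ext
      intro x
      show (LinearEquiv.ofBijective (f.restrict hfW) hbij) (g x) = x
      simp [g]
    rw [this, LinearMap.toMatrix_id]
  -- nilpotency of MV
  have hMVnil : IsNilpotent MV := by
    refine ⟨k, ?_⟩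
    have : MV = LinearMap.toMatrixAlgEquiv bV (f.restrict hfV) := rfl
    rw [this, ← map_pow, hfVnil, map_zero]
  -- the second diagonal block of A-side
  set G2 : Matrix (Fin (Module.finrank ℝ Vk)) (Fin (Module.finrank ℝ Vk)) ℝ :=
    lam • MV - 1 with hG2
  have hG2unit : IsUnit G2 := by
    have : IsNilpotent (lam • MV) := hMVnil.smul lam
    simpa [hG2] using this.isUnit_sub_one
  have hG2det : IsUnit G2.det := (Matrix.isUnit_iff_isUnit_det _).mp hG2unit
  -- commuting facts for nilpotency of N
  have hcommG2 : G2 * MV = MV * G2 := by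
    rw [hG2]
    simp [sub_mul, mul_sub, Matrix.smul_mul, Matrix.mul_smul]
  have hcomm2 : G2⁻¹ * MV = MV * G2⁻¹ := by
    calc G2⁻¹ * MV = G2⁻¹ * MV * (G2 * G2⁻¹) := by
          rw [Matrix.mul_nonsing_inv _ hG2det, mul_one]
      _ = G2⁻¹ * (MV * G2) * G2⁻¹ := by simp only [Matrix.mul_assoc]
      _ = G2⁻¹ * (G2 * MV) * G2⁻¹ := by rw [← hcommG2]
      _ = (G2⁻¹ * G2) * (MV * G2⁻¹) := by simp only [Matrix.mul_assoc]
      _ = MV * G2⁻¹ := by rw [Matrix.nonsing_inv_mul _ hG2det, one_mul]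
  set N := G2⁻¹ * MV with hN
  have hNnil : IsNilpotent N := by
    obtain ⟨m, hm⟩ := hMVnil
    refine ⟨m, ?_⟩
    rw [hN, (Commute.mul_pow (by exact hcomm2) m : (G2⁻¹ * MV) ^ m = _), hm, mul_zero]
  -- linear maps used to build Q and P
  set Rmat := Matrix.fromBlocks MW⁻¹ (0 : Matrix _ _ ℝ) (0 : Matrix _ _ ℝ) G2⁻¹ with hRmat
  set Rmat' := Matrix.fromBlocks MW (0 : Matrix _ _ ℝ) (0 : Matrix _ _ ℝ) G2 with hRmat'
  set r := (LinearMap.toMatrix b b).symm Rmat with hr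
  set r' := (LinearMap.toMatrix b b).symm Rmat' with hr'
  set s : Module.End ℝ (Fin n → ℝ) := Matrix.toLin' S with hs
  set sinv : Module.End ℝ (Fin n → ℝ) := Matrix.toLin' S⁻¹ with hsinv
  have hsinvs : sinv ∘ₗ s = LinearMap.id := by
    rw [hsinv, hs, ← Matrix.toLin'_mul, Matrix.nonsing_inv_mul _ hSdet, Matrix.toLin'_one]
  set q : Module.End ℝ (Fin n → ℝ) := r ∘ₗ sinv with hq
  set Q' := LinearMap.toMatrix stdb b q with hQ'
  set P' := LinearMap.toMatrix b stdb (LinearMap.id : Module.End ℝ (Fin n → ℝ)) with hP'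
  -- r ∘ r' = id
  have hrr' : r ∘ₗ r' = LinearMap.id := by
    apply (LinearMap.toMatrix b b).injective
    rw [LinearMap.toMatrix_comp b b b, hr, hr', LinearEquiv.apply_symm_apply,
      LinearEquiv.apply_symm_apply, LinearMap.toMatrix_id, hRmat, hRmat',
      Matrix.fromBlocks_multiply]
    simp [Matrix.nonsing_inv_mul _ hMWdet, Matrix.nonsing_inv_mul _ hG2det,
      Matrix.fromBlocks_one]
  -- units
  have hQ'unit : IsUnit Q' := by
    rw [Matrix.isUnit_iff_isUnit_det]
    apply Matrix.isUnit_det_of_right_inverse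
      (B := LinearMap.toMatrix b stdb (s ∘ₗ r'))
    rw [hQ', ← LinearMap.toMatrix_comp b stdb b, hq]
    have : (r ∘ₗ sinv) ∘ₗ (s ∘ₗ r') = LinearMap.id := by
      apply LinearMap.ext
      intro x
      have h1 := DFunLike.congr_fun hsinvs (r' x)
      have h2 := DFunLike.congr_fun hrr' x
      simp only [LinearMap.comp_apply, LinearMap.id_apply] at h1 h2 ⊢
      rw [h1, h2]
    rw [this, LinearMap.toMatrix_id]
  have hP'unit : IsUnit P' := by
    rw [Matrix.isUnit_iff_isUnit_det]
    apply Matrix.isUnit_det_of_right_inverse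
      (B := LinearMap.toMatrix stdb b (LinearMap.id : Module.End ℝ (Fin n → ℝ)))
    rw [hP', ← LinearMap.toMatrix_comp stdb b stdb, LinearMap.id_comp, LinearMap.toMatrix_id]
  -- the actual Q and P
  set Q := (Matrix.reindexAlgEquiv ℝ ℝ e).symm Q' with hQdef
  set P := (Matrix.reindexAlgEquiv ℝ ℝ e).symm P' with hPdef
  have hreindex : ∀ (Mmat : Matrix (Fin n) (Fin n) ℝ),
      Matrix.reindex e e (Q * Mmat * P) = Q' * Matrix.reindex e e Mmat * P' := by
    intro Mmat
    have h0 : Matrix.reindex e e (Q * Mmat * P)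
        = (Matrix.reindexAlgEquiv ℝ ℝ e) (Q * Mmat * P) := rfl
    rw [h0, _root_.map_mul, _root_.map_mul, hQdef, hPdef, AlgEquiv.apply_symm_apply,
      AlgEquiv.apply_symm_apply]
    rfl
  have hstd : ∀ (Mmat : Matrix (Fin n) (Fin n) ℝ),
      Matrix.reindex e e Mmat = LinearMap.toMatrix stdb stdb (Matrix.toLin' Mmat) := by
    intro Mmat
    rw [hstdb, toMatrix_reindex_self, LinearMap.toMatrix_eq_toMatrix',
      LinearMap.toMatrix'_toLin']
  have hassemble : ∀ (Mmat : Matrix (Fin n) (Fin n) ℝ) (g : Module.End ℝ (Fin n → ℝ)),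
      q ∘ₗ Matrix.toLin' Mmat = r ∘ₗ g →
      Matrix.reindex e e (Q * Mmat * P) = Rmat * LinearMap.toMatrix b b g := by
    intro Mmat g hg
    rw [hreindex, hstd, ← LinearMap.toMatrix_comp stdb stdb b q (Matrix.toLin' Mmat),
      ← LinearMap.toMatrix_comp b stdb b, LinearMap.comp_id, hg,
      LinearMap.toMatrix_comp b b b, hr, LinearEquiv.apply_symm_apply]
  refine ⟨Q, P, MW⁻¹ * (lam • MW - 1), N, ?_, ?_, hNnil, ?_, ?_⟩
  · exact hQ'unit.map (Matrix.reindexAlgEquiv ℝ ℝ e).symm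
  · exact hP'unit.map (Matrix.reindexAlgEquiv ℝ ℝ e).symm
  · -- E equation
    have hqE : q ∘ₗ Matrix.toLin' E = r ∘ₗ f := by
      rw [hq, LinearMap.comp_assoc, hsinv, ← Matrix.toLin'_mul, ← hEt, ← hf]
    rw [hassemble E f hqE, hMblock, hRmat, Matrix.fromBlocks_multiply]
    simp [Matrix.nonsing_inv_mul _ hMWdet, hN]
  · -- A equation
    have hgA : Matrix.toLin' At = lam • f - LinearMap.id := by
      rw [hAtEt, _root_.map_sub, _root_.map_smul, ← hf, Matrix.toLin'_one]
    have hqA : q ∘ₗ Matrix.toLin' A = r ∘ₗ Matrix.toLin' At := by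
      rw [hq, LinearMap.comp_assoc, hsinv, ← Matrix.toLin'_mul, ← hAt]
    have hblockA : LinearMap.toMatrix b b (Matrix.toLin' At)
        = Matrix.fromBlocks (lam • MW - 1) 0 0 G2 := by
      rw [hgA, _root_.map_sub, _root_.map_smul, LinearMap.toMatrix_id, hMblock, hG2,
        Matrix.fromBlocks_smul, sub_eq_add_neg, ← Matrix.fromBlocks_one,
        Matrix.fromBlocks_neg, Matrix.fromBlocks_add]
      simp [sub_eq_add_neg]
    rw [hassemble A (Matrix.toLin' At) hqA, hblockA, hRmat, Matrix.fromBlocks_multiply]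
    simp [Matrix.nonsing_inv_mul _ hG2det]
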